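/- Weak entropy Balog–Szemerédi–Gowers: let X, Y be G-valued random variables with H(X,Y) ≥ H(X)+H(Y)−log K and H(X+Y) ≤ H(X)/2 + H(Y)/2 + log K for some K ≥ 1. If X_1, X_2 are conditionally independent copies of X given Y, then H(X_1 − X_2 | Y) ≤ H(X) + 4 log K. -/

import Mathlib

open Real
open scoped BigOperators Pointwise Classical

/-- A finitely supported probability space. -/
structure FinProb (Ω : Type*) [Fintype Ω] where
  p : Ω → ℝ
  nonneg : ∀ ω, 0 ≤ p ω
  sum_one : ∑ ω, p ω = 1

/-- Probability that the random variable `X` takes the value `s`. -/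
noncomputable def prob {Ω S : Type*} [Fintype Ω] (μ : FinProb Ω) (X : Ω → S) (s : S) : ℝ :=
  ∑ ω, if X ω = s then μ.p ω else 0

/-- Shannon entropy of a discrete random variable. -/
noncomputable def entropy {Ω S : Type*} [Fintype Ω] (μ : FinProb Ω) (X : Ω → S) : ℝ :=
  ∑ s ∈ Finset.univ.image X, Real.negMulLog (prob μ X s)

/-- Conditional Shannon entropy `H(X|Y) = H(X,Y) - H(Y)`. -/
noncomputable def condEntropy {Ω S T : Type*} [Fintype Ω] (μ : FinProb Ω)
    (X : Ω → S) (Y : Ω → T) : ℝ :=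
  entropy μ (fun ω => (X ω, Y ω)) - entropy μ Y

/-- The essential range of a random variable: values attained with positive probability. -/
noncomputable def rangeF {Ω S : Type*} [Fintype Ω] (μ : FinProb Ω) (X : Ω → S) : Finset S :=
  (Finset.univ.image X).filter (fun s => prob μ X s ≠ 0)

/-- Two random variables (on possibly different spaces) have the same distribution. -/
def IdentDist {Ω Ω' S : Type*} [Fintype Ω] [Fintype Ω'] (μ : FinProb Ω) (X : Ω → S)
    (μ' : FinProb Ω') (Y : Ω' → S) : Prop :=
  ∀ s, prob μ X s = prob μ' Y s

/-- Independence of two random variables. -/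
def IndepRV {Ω S T : Type*} [Fintype Ω] (μ : FinProb Ω) (X : Ω → S) (Y : Ω → T) : Prop :=
  ∀ s t, prob μ (fun ω => (X ω, Y ω)) (s, t) = prob μ X s * prob μ Y t

/-- Joint independence of a finite family of random variables. -/
def IndepFam {Ω ι : Type*} [Fintype Ω] [Fintype ι] {S : ι → Type*}
    (μ : FinProb Ω) (X : ∀ i, Ω → S i) : Prop :=
  ∀ f : ∀ i, S i, prob μ (fun ω i => X i ω) f = ∏ i, prob μ (X i) (f i)

/-- `X` and `Y` are conditionally independent given `W`. -/
def CondIndepGiven {Ω S T U : Type*} [Fintype Ω] (μ : FinProb Ω)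
    (X : Ω → S) (Y : Ω → T) (W : Ω → U) : Prop :=
  ∀ s t u, prob μ (fun ω => (X ω, Y ω, W ω)) (s, t, u) * prob μ W u
    = prob μ (fun ω => (X ω, W ω)) (s, u) * prob μ (fun ω => (Y ω, W ω)) (t, u)

/-- `Y` is determined by `X` (almost surely). -/
def Determines {Ω S T : Type*} [Fintype Ω] (μ : FinProb Ω) (X : Ω → S) (Y : Ω → T) : Prop :=
  ∃ f : S → T, ∀ ω, μ.p ω ≠ 0 → Y ω = f (X ω)

/-- The entropy transport distance between the distributions of `X` and `Y`:
the infimum of `H(Z)` over random variables `Z` (coupled with a copy `X'` of `X`)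
such that `X' + Z` is distributed as `Y`. -/
noncomputable def transDist {Ω₁ Ω₂ G : Type*} [Fintype Ω₁] [Fintype Ω₂] [AddCommGroup G]
    (μ : FinProb Ω₁) (X : Ω₁ → G) (ν : FinProb Ω₂) (Y : Ω₂ → G) : ℝ :=
  sInf {h : ℝ | ∃ (n : ℕ) (μ' : FinProb (Fin n)) (X' Z : Fin n → G),
    IdentDist μ' X' μ X ∧ IdentDist μ' (fun ω => X' ω + Z ω) ν Y ∧ entropy μ' Z = h}

/-- Conditioning a finitely supported probability space on an event `E`
(returning `μ` unchanged if `E` has zero probability). -/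
noncomputable def condFinProb {Ω : Type*} [Fintype Ω] (μ : FinProb Ω) (E : Ω → Prop) :
    FinProb Ω :=
  if h : 0 < ∑ ω, if E ω then μ.p ω else 0 then
    { p := fun ω => if E ω then μ.p ω / (∑ ω', if E ω' then μ.p ω' else 0) else 0
      nonneg := fun ω => by
        try dsimp only
        split
        · exact div_nonneg (μ.nonneg ω) h.le
        · exact le_refl 0
      sum_one := by
        have h' : ∀ ω, (if E ω then μ.p ω / (∑ ω', if E ω' then μ.p ω' else 0) else 0)
            = (if E ω then μ.p ω else 0) / (∑ ω', if E ω' then μ.p ω' else 0) := by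
          intro ω; split <;> simp
        rw [Finset.sum_congr rfl (fun ω _ => h' ω), ← Finset.sum_div, div_self h.ne'] }
  else μ

section AuxBSG

variable {Ω Ω'' : Type*} [Fintype Ω] [Fintype Ω'']

lemma prob_nonneg' {S : Type*} (μ : FinProb Ω) (X : Ω → S) (s : S) : 0 ≤ prob μ X s :=
  Finset.sum_nonneg fun ω _ => by split <;> simp [μ.nonneg ω]

lemma prob_congr' {S T : Type*} (μ : FinProb Ω) {X : Ω → S} {Y : Ω → T} {s : S} {t : T}
    (h : ∀ ω, X ω = s ↔ Y ω = t) : prob μ X s = prob μ Y t :=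
  Finset.sum_congr rfl fun ω _ => by
    by_cases hx : X ω = s
    · rw [if_pos hx, if_pos ((h ω).1 hx)]
    · rw [if_neg hx, if_neg (fun hy => hx ((h ω).2 hy))]

lemma prob_mono' {S T : Type*} (μ : FinProb Ω) {X : Ω → S} {Y : Ω → T} {s : S} {t : T}
    (h : ∀ ω, X ω = s → Y ω = t) : prob μ X s ≤ prob μ Y t :=
  Finset.sum_le_sum fun ω _ => by
    by_cases hx : X ω = s
    · rw [if_pos hx, if_pos (h ω hx)]
    · rw [if_neg hx]; split <;> simp [μ.nonneg ω]

lemma prob_eq_zero' {S : Type*} (μ : FinProb Ω) {X : Ω → S} {s : S} (h : ∀ ω, X ω ≠ s) :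
    prob μ X s = 0 :=
  Finset.sum_eq_zero fun ω _ => if_neg (h ω)

lemma sum_prob' {S : Type*} (μ : FinProb Ω) {X : Ω → S} {A : Finset S}
    (hA : ∀ ω, X ω ∈ A) : ∑ s ∈ A, prob μ X s = 1 := by
  unfold prob
  rw [Finset.sum_comm]
  rw [Finset.sum_congr rfl fun ω _ => ?_]
  · exact μ.sum_one
  · rw [Finset.sum_ite_eq A (X ω) fun _ => μ.p ω, if_pos (hA ω)]

/-- Marginalization: summing a pair probability over the first coordinate. -/
lemma sum_prob_pair' {S T : Type*} (μ : FinProb Ω) {X : Ω → S} {Z : Ω → T} {A : Finset S}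
    (hA : ∀ ω, X ω ∈ A) (t : T) :
    ∑ s ∈ A, prob μ (fun ω => (X ω, Z ω)) (s, t) = prob μ Z t := by
  unfold prob
  rw [Finset.sum_comm]
  refine Finset.sum_congr rfl fun ω _ => ?_
  have hmid : (∑ s ∈ A, if X ω = s then (if Z ω = t then μ.p ω else 0) else 0)
      = if Z ω = t then μ.p ω else 0 := by
    rw [Finset.sum_ite_eq A (X ω) fun _ => if Z ω = t then μ.p ω else 0, if_pos (hA ω)]
  refine Eq.trans ?_ hmid
  exact Finset.sum_congr rfl fun s _ => by
    by_cases h1 : X ω = s <;> by_cases h2 : Z ω = t <;> simp [Prod.ext_iff, h1, h2]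

/-- Marginalization: summing over the second coordinate. -/
lemma sum_prob_pair_snd' {S T : Type*} (μ : FinProb Ω) {X : Ω → S} {Z : Ω → T} {B : Finset T}
    (hB : ∀ ω, Z ω ∈ B) (s : S) :
    ∑ t ∈ B, prob μ (fun ω => (X ω, Z ω)) (s, t) = prob μ X s := by
  rw [Finset.sum_congr rfl fun t _ =>
    (prob_congr' μ (fun ω => by simp only [Prod.mk.injEq]; tauto) :
      prob μ (fun ω => (X ω, Z ω)) (s, t) = prob μ (fun ω => (Z ω, X ω)) (t, s))]
  exact sum_prob_pair' μ hB s


lemma prob_comp' {S T : Type*} (μ : FinProb Ω) {X : Ω → S} (f : S → T) {A : Finset S}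
    (hA : ∀ ω, X ω ∈ A) (t : T) :
    prob μ (fun ω => f (X ω)) t = ∑ s ∈ A, if f s = t then prob μ X s else 0 := by
  have h1 : ∀ s ∈ A, (if f s = t then prob μ X s else 0)
      = ∑ ω, if X ω = s then (if f s = t then μ.p ω else 0) else 0 := by
    intro s _
    by_cases h : f s = t
    · simp only [if_pos h, prob]
    · simp [if_neg h]
  rw [Finset.sum_congr rfl h1, Finset.sum_comm]
  refine Finset.sum_congr rfl fun ω _ => ?_
  have hmid : (∑ s ∈ A, if X ω = s then (if f s = t then μ.p ω else 0) else 0)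
      = if f (X ω) = t then μ.p ω else 0 := by
    rw [Finset.sum_ite_eq A (X ω) fun s => if f s = t then μ.p ω else 0, if_pos (hA ω)]
  rw [hmid]

lemma identDist_comp' {S T : Type*} {μ : FinProb Ω} {ν : FinProb Ω''}
    {Z : Ω → S} {Z' : Ω'' → S} (h : IdentDist μ Z ν Z') (f : S → T) :
    IdentDist μ (fun ω => f (Z ω)) ν (fun ω => f (Z' ω)) := by
  intro t
  classical
  set A := Finset.univ.image Z ∪ Finset.univ.image Z' with hA
  have h1 : ∀ ω, Z ω ∈ A := fun ω =>
    Finset.mem_union_left _ (Finset.mem_image_of_mem Z (Finset.mem_univ ω))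
  have h2 : ∀ ω, Z' ω ∈ A := fun ω =>
    Finset.mem_union_right _ (Finset.mem_image_of_mem Z' (Finset.mem_univ ω))
  rw [prob_comp' μ f h1, prob_comp' ν f h2]
  exact Finset.sum_congr rfl fun s _ => by rw [h s]

lemma entropy_eq_sum' {S : Type*} (μ : FinProb Ω) {X : Ω → S} {A : Finset S}
    (hA : ∀ ω, X ω ∈ A) :
    entropy μ X = ∑ s ∈ A, Real.negMulLog (prob μ X s) := by
  rw [entropy]
  refine Finset.sum_subset (Finset.image_subset_iff.mpr fun ω _ => hA ω) fun s _ hs => ?_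
  have hz : ∀ ω, X ω ≠ s := fun ω h => hs (Finset.mem_image.mpr ⟨ω, Finset.mem_univ ω, h⟩)
  rw [prob_eq_zero' μ hz, Real.negMulLog_zero]

lemma entropy_congr' {S : Type*} {μ : FinProb Ω} {ν : FinProb Ω''}
    {Z : Ω → S} {Z' : Ω'' → S} (h : IdentDist μ Z ν Z') :
    entropy μ Z = entropy ν Z' := by
  classical
  set A := Finset.univ.image Z ∪ Finset.univ.image Z' with hA
  have h1 : ∀ ω, Z ω ∈ A := fun ω =>
    Finset.mem_union_left _ (Finset.mem_image_of_mem Z (Finset.mem_univ ω))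
  have h2 : ∀ ω, Z' ω ∈ A := fun ω =>
    Finset.mem_union_right _ (Finset.mem_image_of_mem Z' (Finset.mem_univ ω))
  rw [entropy_eq_sum' μ h1, entropy_eq_sum' ν h2]
  exact Finset.sum_congr rfl fun s _ => by rw [h s]

lemma entropy_comp_eq' {S T : Type*} (μ : FinProb Ω) (X : Ω → S) (f : S → T) (g : T → S)
    (hg : ∀ ω, g (f (X ω)) = X ω) :
    entropy μ (fun ω => f (X ω)) = entropy μ X := by
  classical
  have himg : Finset.univ.image (fun ω => f (X ω)) = (Finset.univ.image X).image f := by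
    rw [Finset.image_image]; rfl
  have hinj : ∀ x ∈ Finset.univ.image X, ∀ y ∈ Finset.univ.image X, f x = f y → x = y := by
    intro x hx y hy hf
    obtain ⟨ωx, -, rfl⟩ := Finset.mem_image.mp hx
    obtain ⟨ωy, -, rfl⟩ := Finset.mem_image.mp hy
    rw [← hg ωx, ← hg ωy, hf]
  unfold entropy
  rw [himg, Finset.sum_image hinj]
  refine Finset.sum_congr rfl fun s hs => ?_
  obtain ⟨ω₀, -, rfl⟩ := Finset.mem_image.mp hs
  congr 1
  refine prob_congr' μ fun ω => ⟨fun h => ?_, fun h => by rw [h]⟩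
  rw [← hg ω, h, hg ω₀]

lemma sum_negMulLog_le' {ι : Type*} {t : Finset ι} {p q : ι → ℝ}
    (hp : ∀ i ∈ t, 0 ≤ p i) (hq : ∀ i ∈ t, 0 ≤ q i)
    (hdom : ∀ i ∈ t, q i = 0 → p i = 0)
    (hsum : ∑ i ∈ t, q i ≤ ∑ i ∈ t, p i) :
    ∑ i ∈ t, Real.negMulLog (p i) ≤ ∑ i ∈ t, -(p i * Real.log (q i)) := by
  have key : ∀ i ∈ t, Real.negMulLog (p i) - (-(p i * Real.log (q i))) ≤ q i - p i := by
    intro i hi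
    rcases eq_or_lt_of_le (hp i hi) with h0 | hpos
    · simp only [← h0, Real.negMulLog_zero, zero_mul, neg_zero, sub_zero, sub_zero]
      exact hq i hi
    · have hqz : q i ≠ 0 := fun h => (ne_of_gt hpos) (hdom i hi h)
      have hqpos : 0 < q i := lt_of_le_of_ne (hq i hi) (Ne.symm hqz)
      have hlog : Real.log (q i) - Real.log (p i) ≤ q i / p i - 1 := by
        rw [← Real.log_div hqpos.ne' hpos.ne']
        exact Real.log_le_sub_one_of_pos (div_pos hqpos hpos)
      have h2 : p i * (Real.log (q i) - Real.log (p i)) ≤ p i * (q i / p i - 1) :=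
        mul_le_mul_of_nonneg_left hlog hpos.le
      have h3 : p i * (q i / p i - 1) = q i - p i := by field_simp
      calc Real.negMulLog (p i) - (-(p i * Real.log (q i)))
          = p i * (Real.log (q i) - Real.log (p i)) := by
            simp only [Real.negMulLog]; ring
        _ ≤ q i - p i := h3 ▸ h2
  have hsum2 := Finset.sum_le_sum key
  rw [Finset.sum_sub_distrib] at hsum2
  have : ∑ i ∈ t, (q i - p i) ≤ 0 := by rw [Finset.sum_sub_distrib]; linarith
  linarith [hsum2, this]
lemma agg_snd' {S T : Type*} (μ : FinProb Ω) {X : Ω → S} {Z : Ω → T} {A : Finset S}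
    (hA : ∀ ω, X ω ∈ A) (B : Finset T) (F : T → ℝ) :
    ∑ s ∈ A, ∑ z ∈ B, prob μ (fun ω => (X ω, Z ω)) (s, z) * F z
      = ∑ z ∈ B, prob μ Z z * F z := by
  rw [Finset.sum_comm]
  refine Finset.sum_congr rfl fun z _ => ?_
  rw [← Finset.sum_mul, sum_prob_pair' μ hA z]

lemma agg_fst' {S T : Type*} (μ : FinProb Ω) {X : Ω → S} {Z : Ω → T} {B : Finset T}
    (hB : ∀ ω, Z ω ∈ B) (A : Finset S) (F : S → ℝ) :
    ∑ s ∈ A, ∑ z ∈ B, prob μ (fun ω => (X ω, Z ω)) (s, z) * F s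
      = ∑ s ∈ A, prob μ X s * F s := by
  refine Finset.sum_congr rfl fun s _ => ?_
  rw [← Finset.sum_mul, sum_prob_pair_snd' μ hB s]

lemma entropy_eq_neg_sum' {S : Type*} (μ : FinProb Ω) {X : Ω → S} {A : Finset S}
    (hA : ∀ ω, X ω ∈ A) :
    entropy μ X = -(∑ s ∈ A, prob μ X s * Real.log (prob μ X s)) := by
  rw [entropy_eq_sum' μ hA, ← Finset.sum_neg_distrib]
  exact Finset.sum_congr rfl fun s _ => by simp [Real.negMulLog_eq_neg]

/-- Subadditivity of entropy. -/
lemma entropy_pair_le' {S T : Type*} (μ : FinProb Ω) (X : Ω → S) (Z : Ω → T) :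
    entropy μ (fun ω => (X ω, Z ω)) ≤ entropy μ X + entropy μ Z := by
  classical
  set A := Finset.univ.image X with hAdef
  set B := Finset.univ.image Z with hBdef
  have hA : ∀ ω, X ω ∈ A := fun ω => Finset.mem_image_of_mem X (Finset.mem_univ ω)
  have hB : ∀ ω, Z ω ∈ B := fun ω => Finset.mem_image_of_mem Z (Finset.mem_univ ω)
  have hAB : ∀ ω, (X ω, Z ω) ∈ A ×ˢ B := fun ω => Finset.mem_product.mpr ⟨hA ω, hB ω⟩
  set P := prob μ (fun ω => (X ω, Z ω)) with hP
  set pX := prob μ X with hpX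
  set pZ := prob μ Z with hpZ
  have d1 : ∀ x : S × T, P x ≤ pX x.1 := fun x => prob_mono' μ fun ω h => by rw [← h]
  have d2 : ∀ x : S × T, P x ≤ pZ x.2 := fun x => prob_mono' μ fun ω h => by rw [← h]
  have hgibbs : entropy μ (fun ω => (X ω, Z ω))
      ≤ ∑ x ∈ A ×ˢ B, -(P x * Real.log (pX x.1 * pZ x.2)) := by
    rw [entropy_eq_sum' μ hAB]
    refine sum_negMulLog_le' (fun x _ => prob_nonneg' _ _ _)
      (fun x _ => mul_nonneg (prob_nonneg' _ _ _) (prob_nonneg' _ _ _))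
      (fun x _ hx => ?_) ?_
    · rcases mul_eq_zero.mp hx with h | h
      · exact le_antisymm (h ▸ d1 x) (prob_nonneg' _ _ _)
      · exact le_antisymm (h ▸ d2 x) (prob_nonneg' _ _ _)
    · rw [sum_prob' μ hAB, Finset.sum_product]
      rw [Finset.sum_congr rfl fun s (_ : s ∈ A) =>
        (by rw [← Finset.mul_sum, sum_prob' μ hB, mul_one] :
          ∑ t ∈ B, pX s * pZ t = pX s)]
      rw [sum_prob' μ hA]
  have hsplit : ∑ x ∈ A ×ˢ B, -(P x * Real.log (pX x.1 * pZ x.2))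
      = -((∑ x ∈ A ×ˢ B, P x * Real.log (pX x.1))
          + ∑ x ∈ A ×ˢ B, P x * Real.log (pZ x.2)) := by
    rw [← Finset.sum_add_distrib, ← Finset.sum_neg_distrib]
    refine Finset.sum_congr rfl fun x _ => ?_
    by_cases h0 : P x = 0
    · simp [h0]
    · have h1 : pX x.1 ≠ 0 := fun h => h0 (le_antisymm (h ▸ d1 x) (prob_nonneg' _ _ _))
      have h2 : pZ x.2 ≠ 0 := fun h => h0 (le_antisymm (h ▸ d2 x) (prob_nonneg' _ _ _))
      rw [Real.log_mul h1 h2]; ring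
  have hTX : ∑ x ∈ A ×ˢ B, P x * Real.log (pX x.1) = ∑ s ∈ A, pX s * Real.log (pX s) := by
    rw [Finset.sum_product]
    exact agg_fst' μ hB A fun s => Real.log (pX s)
  have hTZ : ∑ x ∈ A ×ˢ B, P x * Real.log (pZ x.2) = ∑ t ∈ B, pZ t * Real.log (pZ t) := by
    rw [Finset.sum_product]
    exact agg_snd' μ hA B fun t => Real.log (pZ t)
  have hHX : entropy μ X = -(∑ s ∈ A, pX s * Real.log (pX s)) := entropy_eq_neg_sum' μ hA
  have hHZ : entropy μ Z = -(∑ t ∈ B, pZ t * Real.log (pZ t)) := entropy_eq_neg_sum' μ hB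
  linarith [hgibbs, hsplit, hTX, hTZ]
section Triple
variable {S T R : Type*} (μ : FinProb Ω) (U : Ω → S) (V : Ω → T) (W : Ω → R)

/-- Aggregation of the `(U,W)`-marginal over a triple grid. -/
lemma aggTUW' (F : S × R → ℝ) :
    ∑ x ∈ (Finset.univ.image U) ×ˢ (Finset.univ.image V) ×ˢ (Finset.univ.image W),
        prob μ (fun ω => (U ω, V ω, W ω)) x * F (x.1, x.2.2)
      = ∑ z ∈ (Finset.univ.image U) ×ˢ (Finset.univ.image W),
          prob μ (fun ω => (U ω, W ω)) z * F z := by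
  classical
  have hB : ∀ ω, V ω ∈ Finset.univ.image V := fun ω =>
    Finset.mem_image_of_mem V (Finset.mem_univ ω)
  have hre : ∀ (s : S) (t : T) (u : R),
      prob μ (fun ω => (U ω, V ω, W ω)) (s, t, u)
        = prob μ (fun ω => (V ω, (U ω, W ω))) (t, (s, u)) := fun s t u =>
    prob_congr' μ fun ω => by simp only [Prod.mk.injEq]; tauto
  calc ∑ x ∈ (Finset.univ.image U) ×ˢ (Finset.univ.image V) ×ˢ (Finset.univ.image W),
        prob μ (fun ω => (U ω, V ω, W ω)) x * F (x.1, x.2.2)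
      = ∑ s ∈ Finset.univ.image U, ∑ t ∈ Finset.univ.image V, ∑ u ∈ Finset.univ.image W,
          prob μ (fun ω => (U ω, V ω, W ω)) (s, t, u) * F (s, u) := by
        rw [Finset.sum_product]
        exact Finset.sum_congr rfl fun s _ => by rw [Finset.sum_product]
    _ = ∑ t ∈ Finset.univ.image V, ∑ s ∈ Finset.univ.image U, ∑ u ∈ Finset.univ.image W,
          prob μ (fun ω => (V ω, (U ω, W ω))) (t, (s, u)) * F (s, u) := by
        rw [Finset.sum_comm]
        exact Finset.sum_congr rfl fun t _ => Finset.sum_congr rfl fun s _ =>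
          Finset.sum_congr rfl fun u _ => by rw [hre s t u]
    _ = ∑ t ∈ Finset.univ.image V, ∑ z ∈ (Finset.univ.image U) ×ˢ (Finset.univ.image W),
          prob μ (fun ω => (V ω, (U ω, W ω))) (t, z) * F z := by
        exact Finset.sum_congr rfl fun t _ => by rw [Finset.sum_product]
    _ = ∑ z ∈ (Finset.univ.image U) ×ˢ (Finset.univ.image W),
          prob μ (fun ω => (U ω, W ω)) z * F z :=
        agg_snd' μ hB _ F

/-- Aggregation of the `(V,W)`-marginal over a triple grid. -/
lemma aggTVW' (F : T × R → ℝ) :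
    ∑ x ∈ (Finset.univ.image U) ×ˢ (Finset.univ.image V) ×ˢ (Finset.univ.image W),
        prob μ (fun ω => (U ω, V ω, W ω)) x * F x.2
      = ∑ z ∈ (Finset.univ.image V) ×ˢ (Finset.univ.image W),
          prob μ (fun ω => (V ω, W ω)) z * F z := by
  classical
  have hA : ∀ ω, U ω ∈ Finset.univ.image U := fun ω =>
    Finset.mem_image_of_mem U (Finset.mem_univ ω)
  rw [Finset.sum_product]
  exact agg_snd' μ hA _ F

/-- Aggregation of the `W`-marginal over a triple grid. -/
lemma aggTW' (F : R → ℝ) :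
    ∑ x ∈ (Finset.univ.image U) ×ˢ (Finset.univ.image V) ×ˢ (Finset.univ.image W),
        prob μ (fun ω => (U ω, V ω, W ω)) x * F x.2.2
      = ∑ u ∈ Finset.univ.image W, prob μ W u * F u := by
  classical
  have hAB : ∀ ω, (U ω, V ω) ∈ (Finset.univ.image U) ×ˢ (Finset.univ.image V) := fun ω =>
    Finset.mem_product.mpr ⟨Finset.mem_image_of_mem U (Finset.mem_univ ω),
      Finset.mem_image_of_mem V (Finset.mem_univ ω)⟩
  have hre : ∀ (s : S) (t : T) (u : R),
      prob μ (fun ω => (U ω, V ω, W ω)) (s, t, u)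
        = prob μ (fun ω => ((U ω, V ω), W ω)) ((s, t), u) := fun s t u =>
    prob_congr' μ fun ω => by simp only [Prod.mk.injEq]; tauto
  calc ∑ x ∈ (Finset.univ.image U) ×ˢ (Finset.univ.image V) ×ˢ (Finset.univ.image W),
        prob μ (fun ω => (U ω, V ω, W ω)) x * F x.2.2
      = ∑ s ∈ Finset.univ.image U, ∑ t ∈ Finset.univ.image V, ∑ u ∈ Finset.univ.image W,
          prob μ (fun ω => (U ω, V ω, W ω)) (s, t, u) * F u := by
        rw [Finset.sum_product]
        exact Finset.sum_congr rfl fun s _ => by rw [Finset.sum_product]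
    _ = ∑ z ∈ (Finset.univ.image U) ×ˢ (Finset.univ.image V), ∑ u ∈ Finset.univ.image W,
          prob μ (fun ω => ((U ω, V ω), W ω)) (z, u) * F u := by
        rw [Finset.sum_product]
        exact Finset.sum_congr rfl fun s _ => Finset.sum_congr rfl fun t _ =>
          Finset.sum_congr rfl fun u _ => by rw [hre s t u]
    _ = ∑ u ∈ Finset.univ.image W, prob μ W u * F u := agg_snd' μ hAB _ F

end Triple
section TripleMain
variable {S T R : Type*}

/-- Submodularity of entropy: `H(U,V,W) + H(W) ≤ H(U,W) + H(V,W)`. -/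
lemma entropy_submodular' (μ : FinProb Ω) (U : Ω → S) (V : Ω → T) (W : Ω → R) :
    entropy μ (fun ω => (U ω, V ω, W ω)) + entropy μ W
      ≤ entropy μ (fun ω => (U ω, W ω)) + entropy μ (fun ω => (V ω, W ω)) := by
  classical
  set A := Finset.univ.image U with hAdef
  set B := Finset.univ.image V with hBdef
  set C := Finset.univ.image W with hCdef
  have hA : ∀ ω, U ω ∈ A := fun ω => Finset.mem_image_of_mem U (Finset.mem_univ ω)
  have hB : ∀ ω, V ω ∈ B := fun ω => Finset.mem_image_of_mem V (Finset.mem_univ ω)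
  have hC : ∀ ω, W ω ∈ C := fun ω => Finset.mem_image_of_mem W (Finset.mem_univ ω)
  have hBC : ∀ ω, (V ω, W ω) ∈ B ×ˢ C := fun ω => Finset.mem_product.mpr ⟨hB ω, hC ω⟩
  have hAC : ∀ ω, (U ω, W ω) ∈ A ×ˢ C := fun ω => Finset.mem_product.mpr ⟨hA ω, hC ω⟩
  have hG : ∀ ω, (U ω, V ω, W ω) ∈ A ×ˢ B ×ˢ C := fun ω =>
    Finset.mem_product.mpr ⟨hA ω, hBC ω⟩
  set p3 := prob μ (fun ω => (U ω, V ω, W ω)) with hp3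
  set pUW := prob μ (fun ω => (U ω, W ω)) with hpUW
  set pVW := prob μ (fun ω => (V ω, W ω)) with hpVW
  set pW := prob μ W with hpW
  have dUW : ∀ x : S × T × R, p3 x ≤ pUW (x.1, x.2.2) := fun x =>
    prob_mono' μ fun ω h => by rw [← h]
  have dVW : ∀ x : S × T × R, p3 x ≤ pVW x.2 := fun x =>
    prob_mono' μ fun ω h => by rw [← h]
  have dW : ∀ x : S × T × R, p3 x ≤ pW x.2.2 := fun x =>
    prob_mono' μ fun ω h => by rw [← h]
  set q : S × T × R → ℝ :=
    fun x => pUW (x.1, x.2.2) * (if pW x.2.2 = 0 then 0 else pVW x.2 / pW x.2.2) with hq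
  have hgibbs : entropy μ (fun ω => (U ω, V ω, W ω))
      ≤ ∑ x ∈ A ×ˢ B ×ˢ C, -(p3 x * Real.log (q x)) := by
    rw [entropy_eq_sum' μ hG]
    refine sum_negMulLog_le' (fun x _ => prob_nonneg' _ _ _)
      (fun x _ => mul_nonneg (prob_nonneg' _ _ _) ?_) (fun x _ hx => ?_) ?_
    · split
      · exact le_refl 0
      · exact div_nonneg (prob_nonneg' _ _ _) (prob_nonneg' _ _ _)
    · rcases mul_eq_zero.mp hx with h | h
      · exact le_antisymm (h ▸ dUW x) (prob_nonneg' _ _ _)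
      · by_cases hW0 : pW x.2.2 = 0
        · exact le_antisymm (hW0 ▸ dW x) (prob_nonneg' _ _ _)
        · rw [if_neg hW0, div_eq_zero_iff] at h
          rcases h with h | h
          · exact le_antisymm (h ▸ dVW x) (prob_nonneg' _ _ _)
          · exact absurd h hW0
    · rw [sum_prob' μ hG]
      calc ∑ x ∈ A ×ˢ B ×ˢ C, q x
          = ∑ z ∈ B ×ˢ C, ∑ s ∈ A, q (s, z) := by
            rw [Finset.sum_product, Finset.sum_comm]
        _ ≤ ∑ z ∈ B ×ˢ C, pVW z := by
            refine Finset.sum_le_sum fun z _ => ?_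
            have h1 : ∑ s ∈ A, q (s, z)
                = (∑ s ∈ A, pUW (s, z.2)) * (if pW z.2 = 0 then 0 else pVW z / pW z.2) := by
              rw [Finset.sum_mul]
            have h2' : (∑ s ∈ A, pUW (s, z.2)) = pW z.2 := by
              rw [hpUW, hpW]; exact sum_prob_pair' μ hA z.2
            rw [h1, h2']
            by_cases hW0 : pW z.2 = 0
            · rw [if_pos hW0, mul_zero]
              exact prob_nonneg' _ _ _
            · rw [if_neg hW0, mul_comm, div_mul_cancel₀ _ hW0]
        _ = 1 := sum_prob' μ hBC
  have hsplit : ∑ x ∈ A ×ˢ B ×ˢ C, -(p3 x * Real.log (q x))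
      = -((∑ x ∈ A ×ˢ B ×ˢ C, p3 x * Real.log (pUW (x.1, x.2.2)))
          + (∑ x ∈ A ×ˢ B ×ˢ C, p3 x * Real.log (pVW x.2))
          - ∑ x ∈ A ×ˢ B ×ˢ C, p3 x * Real.log (pW x.2.2)) := by
    rw [← Finset.sum_add_distrib, ← Finset.sum_sub_distrib, ← Finset.sum_neg_distrib]
    refine Finset.sum_congr rfl fun x _ => ?_
    by_cases h0 : p3 x = 0
    · simp [h0]
    · have h1 : pUW (x.1, x.2.2) ≠ 0 := fun h =>
        h0 (le_antisymm (h ▸ dUW x) (prob_nonneg' _ _ _))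
      have h2 : pVW x.2 ≠ 0 := fun h => h0 (le_antisymm (h ▸ dVW x) (prob_nonneg' _ _ _))
      have h3 : pW x.2.2 ≠ 0 := fun h => h0 (le_antisymm (h ▸ dW x) (prob_nonneg' _ _ _))
      have hqx : q x = pUW (x.1, x.2.2) * (pVW x.2 / pW x.2.2) := by simp only [hq]; rw [if_neg h3]
      rw [hqx, Real.log_mul h1 (div_ne_zero h2 h3), Real.log_div h2 h3]; ring
  have hTUW := aggTUW' μ U V W fun z => Real.log (pUW z)
  have hTVW := aggTVW' μ U V W fun z => Real.log (pVW z)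
  have hTW := aggTW' μ U V W fun u => Real.log (pW u)
  have hHUW : entropy μ (fun ω => (U ω, W ω))
      = -(∑ z ∈ A ×ˢ C, pUW z * Real.log (pUW z)) := entropy_eq_neg_sum' μ hAC
  have hHVW : entropy μ (fun ω => (V ω, W ω))
      = -(∑ z ∈ B ×ˢ C, pVW z * Real.log (pVW z)) := entropy_eq_neg_sum' μ hBC
  have hHW : entropy μ W = -(∑ u ∈ C, pW u * Real.log (pW u)) := entropy_eq_neg_sum' μ hC
  linarith [hgibbs, hsplit, hTUW, hTVW, hTW]

/-- Conditional independence gives `H(U,V,W) + H(W) = H(U,W) + H(V,W)`. -/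
lemma entropy_condIndep' (μ : FinProb Ω) (U : Ω → S) (V : Ω → T) (W : Ω → R)
    (hci : ∀ s t u, prob μ (fun ω => (U ω, V ω, W ω)) (s, t, u) * prob μ W u
      = prob μ (fun ω => (U ω, W ω)) (s, u) * prob μ (fun ω => (V ω, W ω)) (t, u)) :
    entropy μ (fun ω => (U ω, V ω, W ω)) + entropy μ W
      = entropy μ (fun ω => (U ω, W ω)) + entropy μ (fun ω => (V ω, W ω)) := by
  classical
  set A := Finset.univ.image U with hAdef
  set B := Finset.univ.image V with hBdef
  set C := Finset.univ.image W with hCdef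
  have hA : ∀ ω, U ω ∈ A := fun ω => Finset.mem_image_of_mem U (Finset.mem_univ ω)
  have hB : ∀ ω, V ω ∈ B := fun ω => Finset.mem_image_of_mem V (Finset.mem_univ ω)
  have hC : ∀ ω, W ω ∈ C := fun ω => Finset.mem_image_of_mem W (Finset.mem_univ ω)
  have hBC : ∀ ω, (V ω, W ω) ∈ B ×ˢ C := fun ω => Finset.mem_product.mpr ⟨hB ω, hC ω⟩
  have hAC : ∀ ω, (U ω, W ω) ∈ A ×ˢ C := fun ω => Finset.mem_product.mpr ⟨hA ω, hC ω⟩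
  have hG : ∀ ω, (U ω, V ω, W ω) ∈ A ×ˢ B ×ˢ C := fun ω =>
    Finset.mem_product.mpr ⟨hA ω, hBC ω⟩
  set p3 := prob μ (fun ω => (U ω, V ω, W ω)) with hp3
  set pUW := prob μ (fun ω => (U ω, W ω)) with hpUW
  set pVW := prob μ (fun ω => (V ω, W ω)) with hpVW
  set pW := prob μ W with hpW
  have dUW : ∀ x : S × T × R, p3 x ≤ pUW (x.1, x.2.2) := fun x =>
    prob_mono' μ fun ω h => by rw [← h]
  have dVW : ∀ x : S × T × R, p3 x ≤ pVW x.2 := fun x =>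
    prob_mono' μ fun ω h => by rw [← h]
  have dW : ∀ x : S × T × R, p3 x ≤ pW x.2.2 := fun x =>
    prob_mono' μ fun ω h => by rw [← h]
  have hsplit : ∑ x ∈ A ×ˢ B ×ˢ C, Real.negMulLog (p3 x)
      = -((∑ x ∈ A ×ˢ B ×ˢ C, p3 x * Real.log (pUW (x.1, x.2.2)))
          + (∑ x ∈ A ×ˢ B ×ˢ C, p3 x * Real.log (pVW x.2))
          - ∑ x ∈ A ×ˢ B ×ˢ C, p3 x * Real.log (pW x.2.2)) := by
    rw [← Finset.sum_add_distrib, ← Finset.sum_sub_distrib, ← Finset.sum_neg_distrib]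
    refine Finset.sum_congr rfl fun x _ => ?_
    by_cases h0 : p3 x = 0
    · simp [h0]
    · have h1 : pUW (x.1, x.2.2) ≠ 0 := fun h =>
        h0 (le_antisymm (h ▸ dUW x) (prob_nonneg' _ _ _))
      have h2 : pVW x.2 ≠ 0 := fun h => h0 (le_antisymm (h ▸ dVW x) (prob_nonneg' _ _ _))
      have h3 : pW x.2.2 ≠ 0 := fun h => h0 (le_antisymm (h ▸ dW x) (prob_nonneg' _ _ _))
      have hx : p3 x = pUW (x.1, x.2.2) * pVW x.2 / pW x.2.2 := by
        rw [eq_div_iff h3]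
        exact hci x.1 x.2.1 x.2.2
      rw [Real.negMulLog_eq_neg]
      dsimp only
      rw [hx, Real.log_div (mul_ne_zero h1 h2) h3, Real.log_mul h1 h2]
      ring
  have hTUW := aggTUW' μ U V W fun z => Real.log (pUW z)
  have hTVW := aggTVW' μ U V W fun z => Real.log (pVW z)
  have hTW := aggTW' μ U V W fun u => Real.log (pW u)
  have hH3 : entropy μ (fun ω => (U ω, V ω, W ω))
      = ∑ x ∈ A ×ˢ B ×ˢ C, Real.negMulLog (p3 x) := entropy_eq_sum' μ hG
  have hHUW : entropy μ (fun ω => (U ω, W ω))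
      = -(∑ z ∈ A ×ˢ C, pUW z * Real.log (pUW z)) := entropy_eq_neg_sum' μ hAC
  have hHVW : entropy μ (fun ω => (V ω, W ω))
      = -(∑ z ∈ B ×ˢ C, pVW z * Real.log (pVW z)) := entropy_eq_neg_sum' μ hBC
  have hHW : entropy μ W = -(∑ u ∈ C, pW u * Real.log (pW u)) := entropy_eq_neg_sum' μ hC
  linarith [hsplit, hTUW, hTVW, hTW, hH3]

end TripleMain
end AuxBSG

/-- weak entropy Balog–Szemerédi–Gowers: if
`H(X,Y) ≥ H(X) + H(Y) − log K` and `H(X+Y) ≤ H(X)/2 + H(Y)/2 + log K` with `K ≥ 1`,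
and `X₁, X₂` are conditionally independent copies of `X` given `Y` (realised by a copy
`Y'` of `Y`), then `H(X₁ − X₂ | Y') ≤ H(X) + 4·log K`. -/
theorem weak_entropy_bsg {G Ω Ω' : Type*} [AddCommGroup G] [Fintype Ω] [Fintype Ω']
    (μ : FinProb Ω) (X Y : Ω → G) (K : ℝ) (hK : 1 ≤ K)
    (hent : entropy μ (fun ω => (X ω, Y ω)) ≥ entropy μ X + entropy μ Y - Real.log K)
    (hsum : entropy μ (fun ω => X ω + Y ω) ≤
      entropy μ X / 2 + entropy μ Y / 2 + Real.log K)
    (μ' : FinProb Ω') (X₁ X₂ : Ω' → G) (Y' : Ω' → G)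
    (hcopy₁ : IdentDist μ' (fun ω => (X₁ ω, Y' ω)) μ (fun ω => (X ω, Y ω)))
    (hcopy₂ : IdentDist μ' (fun ω => (X₂ ω, Y' ω)) μ (fun ω => (X ω, Y ω)))
    (hci : CondIndepGiven μ' X₁ X₂ Y') :
    condEntropy μ' (fun ω => X₁ ω - X₂ ω) Y' ≤ entropy μ X + 4 * Real.log K := by
  classical
  have hb : entropy μ' Y' = entropy μ Y :=
    entropy_congr' (identDist_comp' hcopy₁ Prod.snd)
  have ha1 : entropy μ' X₁ = entropy μ X :=
    entropy_congr' (identDist_comp' hcopy₁ Prod.fst)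
  have ha2 : entropy μ' X₂ = entropy μ X :=
    entropy_congr' (identDist_comp' hcopy₂ Prod.fst)
  have hj1 : entropy μ' (fun ω => (X₁ ω, Y' ω)) = entropy μ (fun ω => (X ω, Y ω)) :=
    entropy_congr' hcopy₁
  have hj2 : entropy μ' (fun ω => (X₂ ω, Y' ω)) = entropy μ (fun ω => (X ω, Y ω)) :=
    entropy_congr' hcopy₂
  have hs1 : entropy μ' (fun ω => X₁ ω + Y' ω) = entropy μ (fun ω => X ω + Y ω) :=
    entropy_congr' (identDist_comp' hcopy₁ (fun z => z.1 + z.2))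
  have hs2 : entropy μ' (fun ω => X₂ ω + Y' ω) = entropy μ (fun ω => X ω + Y ω) :=
    entropy_congr' (identDist_comp' hcopy₂ (fun z => z.1 + z.2))
  have hsub : entropy μ' (fun ω => (X₂ ω + Y' ω, X₂ ω, X₁ ω - X₂ ω))
      + entropy μ' (fun ω => X₁ ω - X₂ ω)
      ≤ entropy μ' (fun ω => (X₂ ω + Y' ω, X₁ ω - X₂ ω))
        + entropy μ' (fun ω => (X₂ ω, X₁ ω - X₂ ω)) :=
    entropy_submodular' μ' (fun ω => X₂ ω + Y' ω) X₂ (fun ω => X₁ ω - X₂ ω)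
  have e1 : entropy μ' (fun ω => (X₂ ω + Y' ω, X₂ ω, X₁ ω - X₂ ω))
      = entropy μ' (fun ω => (X₁ ω, X₂ ω, Y' ω)) :=
    entropy_comp_eq' μ' (fun ω => (X₁ ω, X₂ ω, Y' ω))
      (fun x => (x.2.1 + x.2.2, x.2.1, x.1 - x.2.1))
      (fun x => (x.2.2 + x.2.1, x.2.1, x.1 - x.2.1))
      (fun ω => by simp only [Prod.mk.injEq]; and_intros <;> first | trivial | abel)
  have e2 : entropy μ' (fun ω => (X₂ ω + Y' ω, X₁ ω - X₂ ω))
      = entropy μ' (fun ω => (X₁ ω + Y' ω, X₂ ω + Y' ω)) := by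
    have h := entropy_comp_eq' μ' (fun ω => (X₁ ω + Y' ω, X₂ ω + Y' ω))
      (fun z => (z.2, z.1 - z.2)) (fun w => (w.2 + w.1, w.1))
      (fun ω => by simp only [Prod.mk.injEq]; and_intros <;> first | trivial | abel)
    have hfe : (fun ω => (X₂ ω + Y' ω, X₁ ω + Y' ω - (X₂ ω + Y' ω)))
        = (fun ω => (X₂ ω + Y' ω, X₁ ω - X₂ ω)) := by
      funext ω; simp only [Prod.mk.injEq]; and_intros <;> first | trivial | abel
    rw [← hfe]; exact h
  have e3 : entropy μ' (fun ω => (X₂ ω, X₁ ω - X₂ ω))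
      = entropy μ' (fun ω => (X₁ ω, X₂ ω)) :=
    entropy_comp_eq' μ' (fun ω => (X₁ ω, X₂ ω))
      (fun z => (z.2, z.1 - z.2)) (fun w => (w.2 + w.1, w.1))
      (fun ω => by simp only [Prod.mk.injEq]; and_intros <;> first | trivial | abel)
  have p1 : entropy μ' (fun ω => (X₁ ω - X₂ ω, Y' ω))
      ≤ entropy μ' (fun ω => X₁ ω - X₂ ω) + entropy μ' Y' :=
    entropy_pair_le' μ' (fun ω => X₁ ω - X₂ ω) Y'
  have p2 : entropy μ' (fun ω => (X₁ ω + Y' ω, X₂ ω + Y' ω))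
      ≤ entropy μ' (fun ω => X₁ ω + Y' ω) + entropy μ' (fun ω => X₂ ω + Y' ω) :=
    entropy_pair_le' μ' (fun ω => X₁ ω + Y' ω) (fun ω => X₂ ω + Y' ω)
  have p3 : entropy μ' (fun ω => (X₁ ω, X₂ ω)) ≤ entropy μ' X₁ + entropy μ' X₂ :=
    entropy_pair_le' μ' X₁ X₂
  have hE : entropy μ' (fun ω => (X₁ ω, X₂ ω, Y' ω)) + entropy μ' Y'
      = entropy μ' (fun ω => (X₁ ω, Y' ω)) + entropy μ' (fun ω => (X₂ ω, Y' ω)) :=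
    entropy_condIndep' μ' X₁ X₂ Y' hci
  have hgoal : condEntropy μ' (fun ω => X₁ ω - X₂ ω) Y'
      = entropy μ' (fun ω => (X₁ ω - X₂ ω, Y' ω)) - entropy μ' Y' := rfl
  rw [hgoal]
  linarith [hent, hsum, hb, ha1, ha2, hj1, hj2, hs1, hs2, hsub, e1, e2, e3, p1, p2, p3, hE]
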